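/- Let F be a free Lie ring and R an ideal of F, and let 0 → A → B → C → 0 be a central extension of Lie rings. Then any Lie ring homomorphism α : F/R → C lifts to a homomorphism β : F/[F,R] → B making the diagram commute, i.e., φ ∘ β = α ∘ π where π : F/[F,R] → F/R is the natural projection and φ : B → C the given surjection. -/

import Mathlib

/-- The quotient map as a Lie algebra homomorphism. -/
def lieQuotHom {R L : Type*} [CommRing R] [LieRing L] [LieAlgebra R L]
    (I : LieIdeal R L) : L →ₗ⁅R⁆ L ⧸ I :=
  { (LieSubmodule.Quotient.mk' I).toLinearMap with
    map_lie' := rfl }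

@[simp] lemma lieQuotHom_apply {R L : Type*} [CommRing R] [LieRing L] [LieAlgebra R L]
    (I : LieIdeal R L) (x : L) : lieQuotHom I x = LieSubmodule.Quotient.mk (N := I) x := rfl

/-- Let `F` be a free Lie ring (the free Lie ring on a set `X`,
i.e. the free Lie algebra over `ℤ`), `R` an ideal of `F`, and
`0 → A → B → C → 0` a central extension of Lie rings (`φ : B → C` surjective
with central kernel). Then any Lie ring homomorphism `α : F/R → C` lifts to a
homomorphism `β : F/[F,R] → B` making the diagram commute:
`φ ∘ β = α ∘ π` for the natural projection `π : F/[F,R] → F/R`. -/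
theorem lift_of_free_presentation {X B C : Type*} [LieRing B] [LieRing C]
    (R : LieIdeal ℤ (FreeLieAlgebra ℤ X))
    (φ : B →ₗ⁅ℤ⁆ C) (hsurj : Function.Surjective φ)
    (hcent : ∀ a : B, φ a = 0 → ∀ b : B, ⁅a, b⁆ = 0)
    (α : (FreeLieAlgebra ℤ X ⧸ R) →ₗ⁅ℤ⁆ C) :
    ∃ β : (FreeLieAlgebra ℤ X ⧸
        (⁅(⊤ : LieIdeal ℤ (FreeLieAlgebra ℤ X)), R⁆ :
          LieIdeal ℤ (FreeLieAlgebra ℤ X))) →ₗ⁅ℤ⁆ B,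
      ∀ x : FreeLieAlgebra ℤ X,
        φ (β (LieSubmodule.Quotient.mk x)) = α (LieSubmodule.Quotient.mk x) := by
  classical
  set F := FreeLieAlgebra ℤ X
  set J : LieIdeal ℤ F := ⁅(⊤ : LieIdeal ℤ F), R⁆
  -- choose lifts of generators
  let g : F →ₗ⁅ℤ⁆ B :=
    FreeLieAlgebra.lift ℤ fun x => (hsurj (α (lieQuotHom R (FreeLieAlgebra.of ℤ x)))).choose
  have key : ∀ x : F, φ (g x) = α (lieQuotHom R x) := by
    have : φ.comp g = α.comp (lieQuotHom R) := by
      apply FreeLieAlgebra.hom_ext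
      intro x
      simp only [LieHom.comp_apply, g]
      refine (congrArg φ (FreeLieAlgebra.lift_of_apply (R := ℤ)
        (f := fun x => (hsurj (α (lieQuotHom R (FreeLieAlgebra.of ℤ x)))).choose) (x := x))).trans ?_
      exact (hsurj (α (lieQuotHom R (FreeLieAlgebra.of ℤ x)))).choose_spec
    intro x
    exact congrArg (fun h : F →ₗ⁅ℤ⁆ C => h x) this
  -- g maps R into ker φ
  have hR : ∀ r ∈ R, φ (g r) = 0 := by
    intro r hr
    rw [key r]
    have : lieQuotHom R r = 0 := (LieSubmodule.Quotient.mk_eq_zero' (N := R)).2 hr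
    rw [this, map_zero]
  -- J is killed by g
  have hJ : ∀ x ∈ J, g x = 0 := by
    have hle : J ≤ g.ker := by
      rw [LieSubmodule.lie_le_iff]
      intro x _ r hr
      rw [LieHom.mem_ker, LieHom.map_lie, ← lie_skew]
      rw [hcent (g r) (hR r hr) (g x)]
      exact neg_zero
    intro x hx
    exact (LieHom.mem_ker).1 (hle hx)
  -- build β via the linear quotient lift
  have hJ' : J.toSubmodule ≤ LinearMap.ker g.toLinearMap := fun x hx => hJ x hx
  let b : (F ⧸ J) →ₗ[ℤ] B := Submodule.liftQ J.toSubmodule g.toLinearMap hJ'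
  have hb : ∀ x : F, b (LieSubmodule.Quotient.mk (N := J) x) = g x := fun _ => rfl
  let β : (F ⧸ J) →ₗ⁅ℤ⁆ B :=
    { b with
      map_lie' := by
        intro x y
        induction x using Quotient.inductionOn' with
        | h x =>
        induction y using Quotient.inductionOn' with
        | h y =>
        show b ⁅LieSubmodule.Quotient.mk (N := J) x, LieSubmodule.Quotient.mk (N := J) y⁆ =
          ⁅b (LieSubmodule.Quotient.mk (N := J) x), b (LieSubmodule.Quotient.mk (N := J) y)⁆
        rw [← LieSubmodule.Quotient.mk_bracket, hb, hb, hb]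
        exact g.map_lie x y }
  refine ⟨β, fun x => ?_⟩
  show φ (b (LieSubmodule.Quotient.mk (N := J) x)) = _
  rw [hb, key]
  rfl
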